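/- If X ~ BGamma(α,β,δ), then E[X] = (α/(βZ))·κ, where κ = 2 − 2(δ/β)(1+α) + (δ²/β²)(1+α)(2+α) and Z = 2 + (αδ/β)[(1+α)δ/β − 2]. -/

import Mathlib

open MeasureTheory Real Set

noncomputable def Zc (α β δ : ℝ) : ℝ := 2 + (α * δ / β) * ((1 + α) * δ / β - 2)

noncomputable def bgammaPDF (α β δ x : ℝ) : ℝ :=
  (1 + (1 - δ * x) ^ 2) / Zc α β δ * (β ^ α / Real.Gamma α) * x ^ (α - 1) * Real.exp (-β * x)

noncomputable def gammaPDF (α β x : ℝ) : ℝ :=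
  β ^ α / Real.Gamma α * x ^ (α - 1) * Real.exp (-β * x)

lemma integrableOn_aux {a β : ℝ} (ha : 0 < a) (hβ : 0 < β) :
    IntegrableOn (fun x : ℝ => x ^ (a - 1) * Real.exp (-(β * x))) (Ioi 0) := by
  have := integrableOn_rpow_mul_exp_neg_mul_rpow (p := 1) (s := a - 1) (b := β)
    (by linarith) one_pos hβ
  simpa [Real.rpow_one] using this

theorem bgamma_mean (α β δ : ℝ) (hα : 0 < α) (hβ : 0 < β) :
    ∫ x in Ioi (0:ℝ), x * bgammaPDF α β δ x =
      α / (β * Zc α β δ) *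
        (2 - 2 * (δ / β) * (1 + α) + (δ / β) ^ 2 * (1 + α) * (2 + α)) := by
  have hG : 0 < Real.Gamma α := Real.Gamma_pos_of_pos hα
  set C : ℝ := β ^ α / Real.Gamma α with hC
  -- pointwise rewriting of the integrand
  have key : ∀ x ∈ Ioi (0:ℝ), x * bgammaPDF α β δ x =
      (C / Zc α β δ) *
        (2 * (x ^ ((α + 1) - 1) * Real.exp (-(β * x))) +
          (-2 * δ) * (x ^ ((α + 2) - 1) * Real.exp (-(β * x))) +
          δ ^ 2 * (x ^ ((α + 3) - 1) * Real.exp (-(β * x)))) := by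
    intro x hx
    have hx : (0:ℝ) < x := hx
    have h1 : x ^ ((α + 1) - 1) = x ^ (α - 1) * x := by
      rw [show (α + 1) - 1 = (α - 1) + 1 by ring, Real.rpow_add hx, Real.rpow_one]
    have h2 : x ^ ((α + 2) - 1) = x ^ (α - 1) * x * x := by
      rw [show (α + 2) - 1 = ((α - 1) + 1) + 1 by ring, Real.rpow_add hx,
        Real.rpow_add hx, Real.rpow_one]
    have h3 : x ^ ((α + 3) - 1) = x ^ (α - 1) * x * x * x := by
      rw [show (α + 3) - 1 = (((α - 1) + 1) + 1) + 1 by ring, Real.rpow_add hx,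
        Real.rpow_add hx, Real.rpow_add hx, Real.rpow_one]
    simp only [bgammaPDF, neg_mul, h1, h2, h3, hC]
    ring
  rw [setIntegral_congr_fun measurableSet_Ioi key]
  have i1 := integrableOn_aux (a := α + 1) (by linarith) hβ
  have i2 := integrableOn_aux (a := α + 2) (by linarith) hβ
  have i3 := integrableOn_aux (a := α + 3) (by linarith) hβ
  have i12 : IntegrableOn (fun x : ℝ => 2 * (x ^ ((α + 1) - 1) * Real.exp (-(β * x))) +
      -2 * δ * (x ^ ((α + 2) - 1) * Real.exp (-(β * x)))) (Ioi 0) :=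
    (i1.const_mul 2).add (i2.const_mul (-2 * δ))
  rw [integral_const_mul, integral_add i12 (i3.const_mul (δ ^ 2)),
    integral_add (i1.const_mul 2) (i2.const_mul (-2 * δ)),
    integral_const_mul, integral_const_mul, integral_const_mul,
    Real.integral_rpow_mul_exp_neg_mul_Ioi (by linarith : (0:ℝ) < α + 1) hβ,
    Real.integral_rpow_mul_exp_neg_mul_Ioi (by linarith : (0:ℝ) < α + 2) hβ,
    Real.integral_rpow_mul_exp_neg_mul_Ioi (by linarith : (0:ℝ) < α + 3) hβ]
  -- now pure algebra
  have g1 : Real.Gamma (α + 1) = α * Real.Gamma α := Real.Gamma_add_one hα.ne'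
  have g2 : Real.Gamma (α + 2) = (α + 1) * Real.Gamma (α + 1) := by
    rw [show α + 2 = (α + 1) + 1 by ring, Real.Gamma_add_one (by linarith)]
  have g3 : Real.Gamma (α + 3) = (α + 2) * Real.Gamma (α + 2) := by
    rw [show α + 3 = (α + 2) + 1 by ring, Real.Gamma_add_one (by linarith)]
  have hb0 : (0:ℝ) < 1 / β := by positivity
  have p1 : ((1:ℝ) / β) ^ (α + 1) = (1 / β) ^ α * (1 / β) := by
    rw [Real.rpow_add hb0, Real.rpow_one]
  have p2 : ((1:ℝ) / β) ^ (α + 2) = (1 / β) ^ α * (1 / β) * (1 / β) := by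
    rw [show α + 2 = (α + 1) + 1 by ring, Real.rpow_add hb0, Real.rpow_one, p1]
  have p3 : ((1:ℝ) / β) ^ (α + 3) = (1 / β) ^ α * (1 / β) * (1 / β) * (1 / β) := by
    rw [show α + 3 = (α + 2) + 1 by ring, Real.rpow_add hb0, Real.rpow_one, p2]
  have pinv : ((1:ℝ) / β) ^ α = (β ^ α)⁻¹ := by
    rw [one_div]
    exact Real.inv_rpow hβ.le α
  rw [g3, g2, g1, p1, p2, p3, pinv]
  have hBα : (0:ℝ) < β ^ α := Real.rpow_pos_of_pos hβ α
  set Z := Zc α β δ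
  have main : C * (2 * ((β ^ α)⁻¹ * (1 / β) * (α * Real.Gamma α)) +
      -2 * δ * ((β ^ α)⁻¹ * (1 / β) * (1 / β) * ((α + 1) * (α * Real.Gamma α))) +
      δ ^ 2 * ((β ^ α)⁻¹ * (1 / β) * (1 / β) * (1 / β) *
        ((α + 2) * ((α + 1) * (α * Real.Gamma α))))) =
      α / β * (2 - 2 * (δ / β) * (1 + α) + (δ / β) ^ 2 * (1 + α) * (2 + α)) := by
    rw [hC]
    field_simp
    ring
  calc C / Z * (2 * ((β ^ α)⁻¹ * (1 / β) * (α * Real.Gamma α)) +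
      -2 * δ * ((β ^ α)⁻¹ * (1 / β) * (1 / β) * ((α + 1) * (α * Real.Gamma α))) +
      δ ^ 2 * ((β ^ α)⁻¹ * (1 / β) * (1 / β) * (1 / β) *
        ((α + 2) * ((α + 1) * (α * Real.Gamma α)))))
      = (C * (2 * ((β ^ α)⁻¹ * (1 / β) * (α * Real.Gamma α)) +
        -2 * δ * ((β ^ α)⁻¹ * (1 / β) * (1 / β) * ((α + 1) * (α * Real.Gamma α))) +
        δ ^ 2 * ((β ^ α)⁻¹ * (1 / β) * (1 / β) * (1 / β) *
          ((α + 2) * ((α + 1) * (α * Real.Gamma α)))))) / Z := by ring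
    _ = (α / β * (2 - 2 * (δ / β) * (1 + α) + (δ / β) ^ 2 * (1 + α) * (2 + α))) / Z := by
        rw [main]
    _ = α / (β * Z) * (2 - 2 * (δ / β) * (1 + α) + (δ / β) ^ 2 * (1 + α) * (2 + α)) := by
        ring
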